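/- With P_S the tangent-space projector at rank-r matrix X_l (as above) and T a rank-r matrix with smallest nonzero singular value σ_r(T) > 0, it holds that ‖(I − P_S)T‖_F ≤ (‖T − X_l‖_F² ) / σ_r(T). (Matrix case d = 2 of the tangent space approximation lemma, where 2^d − 1 = 3 improves to 1 in the matrix case.) -/
import Mathlib


open Matrix

noncomputable def frobNorm {p q : ℕ} (A : Matrix (Fin p) (Fin q) ℝ) : ℝ :=
  Real.sqrt (∑ i, ∑ j, (A i j) ^ 2)

noncomputable def specNorm {p q : ℕ} (A : Matrix (Fin p) (Fin q) ℝ) : ℝ :=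
  ‖LinearMap.toContinuousLinearMap (Matrix.toEuclideanLin A)‖

namespace TSAux

noncomputable def frobSq {p q : ℕ} (A : Matrix (Fin p) (Fin q) ℝ) : ℝ :=
  ∑ i, ∑ j, (A i j) ^ 2

lemma frobNorm_eq {p q : ℕ} (A : Matrix (Fin p) (Fin q) ℝ) :
    frobNorm A = Real.sqrt (frobSq A) := rfl

lemma frobSq_nonneg {p q : ℕ} (A : Matrix (Fin p) (Fin q) ℝ) : 0 ≤ frobSq A := by
  apply Finset.sum_nonneg; intro i _; apply Finset.sum_nonneg; intro j _; positivity

lemma frobNorm_nonneg {p q : ℕ} (A : Matrix (Fin p) (Fin q) ℝ) : 0 ≤ frobNorm A :=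
  Real.sqrt_nonneg _

lemma frobNorm_sq {p q : ℕ} (A : Matrix (Fin p) (Fin q) ℝ) :
    frobNorm A ^ 2 = frobSq A := Real.sq_sqrt (frobSq_nonneg A)

lemma frobNorm_le_frobNorm {p q s t : ℕ} {A : Matrix (Fin p) (Fin q) ℝ}
    {B : Matrix (Fin s) (Fin t) ℝ}
    (h : frobSq A ≤ frobSq B) : frobNorm A ≤ frobNorm B :=
  Real.sqrt_le_sqrt h

lemma frobSq_transpose {p q : ℕ} (A : Matrix (Fin p) (Fin q) ℝ) :
    frobSq Aᵀ = frobSq A := by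
  unfold frobSq; rw [Finset.sum_comm]; rfl

lemma frobSq_eq_trace {p q : ℕ} (A : Matrix (Fin p) (Fin q) ℝ) :
    frobSq A = Matrix.trace (Aᵀ * A) := by
  unfold frobSq
  simp only [Matrix.trace, Matrix.diag, Matrix.mul_apply, Matrix.transpose_apply, sq]
  rw [Finset.sum_comm]

lemma frobNorm_mul_le {p q s : ℕ} (A : Matrix (Fin p) (Fin q) ℝ)
    (B : Matrix (Fin q) (Fin s) ℝ) :
    frobNorm (A * B) ≤ frobNorm A * frobNorm B := by
  have hsq : frobSq (A * B) ≤ frobSq A * frobSq B := by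
    unfold frobSq
    calc ∑ i, ∑ j, ((A * B) i j) ^ 2
        ≤ ∑ i, ∑ j, (∑ k, (A i k)^2) * (∑ k, (B k j)^2) := by
          apply Finset.sum_le_sum; intro i _; apply Finset.sum_le_sum; intro j _
          rw [Matrix.mul_apply]
          exact Finset.sum_mul_sq_le_sq_mul_sq _ _ _
      _ = (∑ i, ∑ k, (A i k)^2) * (∑ k, ∑ j, (B k j)^2) := by
          rw [Finset.sum_mul]
          apply Finset.sum_congr rfl; intro i _
          rw [← Finset.mul_sum, Finset.sum_comm]
  rw [frobNorm_eq, frobNorm_eq, frobNorm_eq, ← Real.sqrt_mul (frobSq_nonneg A)]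
  exact Real.sqrt_le_sqrt hsq

lemma frobSq_mul_trace {p q : ℕ} (B : Matrix (Fin p) (Fin q) ℝ)
    {s : ℕ} (W : Matrix (Fin q) (Fin s) ℝ) :
    frobSq (B * W) = Matrix.trace (Bᵀ * B * (W * Wᵀ)) := by
  rw [frobSq_eq_trace, Matrix.transpose_mul, Matrix.mul_assoc,
    Matrix.trace_mul_comm (Wᵀ) (Bᵀ * (B * W))]
  rw [Matrix.mul_assoc, Matrix.mul_assoc, Matrix.mul_assoc]

lemma frobSq_mul_proj_le {p q : ℕ} (B : Matrix (Fin p) (Fin q) ℝ)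
    (Q : Matrix (Fin q) (Fin q) ℝ) (h1 : Qᵀ = Q) (h2 : Q * Q = Q) :
    frobSq (B * Q) ≤ frobSq B := by
  have e1 : frobSq (B * Q) = Matrix.trace (Bᵀ * B * Q) := by
    rw [frobSq_mul_trace, h1, h2]
  have e2 : frobSq (B * (1 - Q)) = Matrix.trace (Bᵀ * B * (1 - Q)) := by
    rw [frobSq_mul_trace]
    congr 1
    rw [Matrix.transpose_sub, Matrix.transpose_one, h1, Matrix.mul_sub, Matrix.sub_mul,
      Matrix.sub_mul, h2]
    simp
  have key : frobSq (B * Q) + frobSq (B * (1 - Q)) = frobSq B := by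
    rw [e1, e2, ← Matrix.trace_add, ← Matrix.mul_add]
    simp [frobSq_eq_trace]
  nlinarith [frobSq_nonneg (B * (1 - Q))]

lemma frobSq_proj_mul_le {p q : ℕ} (B : Matrix (Fin p) (Fin q) ℝ)
    (Q : Matrix (Fin p) (Fin p) ℝ) (h1 : Qᵀ = Q) (h2 : Q * Q = Q) :
    frobSq (Q * B) ≤ frobSq B := by
  have : frobSq (Q * B) = frobSq (Bᵀ * Q) := by
    rw [← frobSq_transpose (Q * B), Matrix.transpose_mul, h1]
  rw [this, ← frobSq_transpose B]
  exact frobSq_mul_proj_le Bᵀ Q h1 h2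

lemma frobSq_mul_orth_le {p q s : ℕ} (B : Matrix (Fin p) (Fin q) ℝ)
    (W : Matrix (Fin q) (Fin s) ℝ) (hW : Wᵀ * W = 1) :
    frobSq (B * W) ≤ frobSq B := by
  have h1 : (W * Wᵀ)ᵀ = W * Wᵀ := by rw [Matrix.transpose_mul, Matrix.transpose_transpose]
  have h2 : (W * Wᵀ) * (W * Wᵀ) = W * Wᵀ := by
    rw [Matrix.mul_assoc, ← Matrix.mul_assoc Wᵀ W, hW, Matrix.one_mul]
  have e : frobSq (B * W) = frobSq (B * (W * Wᵀ)) := by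
    rw [frobSq_mul_trace, frobSq_mul_trace, h1, h2]
  rw [e]
  exact frobSq_mul_proj_le B (W * Wᵀ) h1 h2

lemma frobSq_orth_mul_le {p q s : ℕ} (B : Matrix (Fin p) (Fin q) ℝ)
    (W : Matrix (Fin p) (Fin s) ℝ) (hW : Wᵀ * W = 1) :
    frobSq (Wᵀ * B) ≤ frobSq B := by
  have : frobSq (Wᵀ * B) = frobSq (Bᵀ * W) := by
    rw [← frobSq_transpose (Wᵀ * B), Matrix.transpose_mul, Matrix.transpose_transpose]
  rw [this, ← frobSq_transpose B]
  exact frobSq_mul_orth_le Bᵀ W hW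

end TSAux

open TSAux in
/-- tangent-space approximation bound in the matrix case:
`‖(I − P_S)T‖_F ≤ ‖T − X_l‖_F² / σ_r(T)`, where `σr` is a positive lower bound for the
nonzero singular values of the rank-`r` matrix `T = U C Vᵀ`. -/
theorem tangent_space_approximation {n₁ n₂ r : ℕ}
    (Ul U : Matrix (Fin n₁) (Fin r) ℝ) (Vl V : Matrix (Fin n₂) (Fin r) ℝ)
    (Cl C : Matrix (Fin r) (Fin r) ℝ)
    (T Xl : Matrix (Fin n₁) (Fin n₂) ℝ)
    (hUl : Ulᵀ * Ul = 1) (hVl : Vlᵀ * Vl = 1)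
    (hU : Uᵀ * U = 1) (hV : Vᵀ * V = 1)
    (hXl : Xl = Ul * Cl * Vlᵀ) (hT : T = U * C * Vᵀ)
    (hrankT : T.rank = r) (hrankXl : Xl.rank = r)
    (σr : ℝ) (hσpos : 0 < σr)
    (hσ : ∀ v : Matrix (Fin r) (Fin 1) ℝ, σr * frobNorm v ≤ frobNorm (C * v))
    (P : Matrix (Fin n₁) (Fin n₂) ℝ → Matrix (Fin n₁) (Fin n₂) ℝ)
    (hP : ∀ Z, P Z = Ul * Ulᵀ * Z + Z * (Vl * Vlᵀ) - Ul * Ulᵀ * Z * (Vl * Vlᵀ)) :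
    frobNorm (T - P T) ≤ frobNorm (T - Xl) ^ 2 / σr := by
  classical
  -- multi-column version of the singular value bound
  have hσmat : ∀ {q : ℕ} (A : Matrix (Fin r) (Fin q) ℝ),
      σr * frobNorm A ≤ frobNorm (C * A) := by
    intro q A
    have hcol : ∀ j : Fin q, σr ^ 2 * (∑ i, (A i j) ^ 2) ≤ ∑ i, ((C * A) i j) ^ 2 := by
      intro j
      set col : Matrix (Fin r) (Fin 1) ℝ := Matrix.of fun i _ => A i j with hcoldef
      have h := hσ col
      have hs : (σr * frobNorm col) ^ 2 ≤ (frobNorm (C * col)) ^ 2 := by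
        apply pow_le_pow_left₀ (mul_nonneg hσpos.le (frobNorm_nonneg col)) h
      rw [mul_pow, frobNorm_sq, frobNorm_sq] at hs
      have e1 : frobSq col = ∑ i, (A i j) ^ 2 := by
        unfold frobSq; simp [hcoldef]
      have e2 : frobSq (C * col) = ∑ i, ((C * A) i j) ^ 2 := by
        unfold frobSq
        simp [hcoldef, Matrix.mul_apply]
      rw [e1, e2] at hs
      exact hs
    have hsq : σr ^ 2 * frobSq A ≤ frobSq (C * A) := by
      have l1 : σr ^ 2 * frobSq A = ∑ j, σr ^ 2 * ∑ i, (A i j) ^ 2 := by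
        unfold frobSq; rw [Finset.sum_comm, Finset.mul_sum]
      have l2 : frobSq (C * A) = ∑ j, ∑ i, ((C * A) i j) ^ 2 := by
        unfold frobSq; rw [Finset.sum_comm]
      rw [l1, l2]
      exact Finset.sum_le_sum fun j _ => hcol j
    have := Real.sqrt_le_sqrt hsq
    rw [Real.sqrt_mul (by positivity), Real.sqrt_sq hσpos.le] at this
    rw [frobNorm_eq, frobNorm_eq]
    exact this
  -- C is invertible
  have hinj : Function.Injective C.mulVec := by
    intro v w h
    have hker : C.mulVec (v - w) = 0 := by
      rw [Matrix.mulVec_sub, h, sub_self]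
    set col : Matrix (Fin r) (Fin 1) ℝ := Matrix.of fun i _ => (v - w) i with hcoldef
    have hM0 : C * col = 0 := by
      ext i j
      have := congrFun hker i
      simpa [hcoldef, Matrix.mul_apply, Matrix.mulVec, dotProduct] using this
    have h0 := hσ col
    rw [hM0] at h0
    have hz : frobNorm (0 : Matrix (Fin r) (Fin 1) ℝ) = 0 := by
      simp [frobNorm]
    rw [hz] at h0
    have hn0 : frobNorm col = 0 := by
      have := frobNorm_nonneg col
      nlinarith
    have hs0 : frobSq col = 0 := by
      rw [← frobNorm_sq, hn0]; ring
    have hsum : (∑ i, ((v - w) i) ^ 2) = 0 := by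
      rw [← hs0]; unfold frobSq; simp [hcoldef]
    have : ∀ i, (v - w) i = 0 := by
      intro i
      have := (Finset.sum_eq_zero_iff_of_nonneg
        (fun i _ => sq_nonneg ((v - w) i))).mp hsum i (Finset.mem_univ i)
      exact pow_eq_zero_iff (two_ne_zero) |>.mp this
    have : v - w = 0 := funext this
    exact sub_eq_zero.mp this
  have hCu : IsUnit C := Matrix.mulVec_injective_iff_isUnit.mp hinj
  have hdet : IsUnit C.det := (Matrix.isUnit_iff_isUnit_det C).mp hCu
  have hDC : C⁻¹ * C = 1 := Matrix.nonsing_inv_mul C hdet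
  have hCD : C * C⁻¹ = 1 := Matrix.mul_nonsing_inv C hdet
  set M : Matrix (Fin n₁) (Fin n₂) ℝ := T - Xl with hM
  set Q1 : Matrix (Fin n₁) (Fin n₁) ℝ := 1 - Ul * Ulᵀ with hQ1
  set Q4 : Matrix (Fin n₂) (Fin n₂) ℝ := 1 - Vl * Vlᵀ with hQ4
  -- projector properties
  have hQ1t : Q1ᵀ = Q1 := by
    rw [hQ1, Matrix.transpose_sub, Matrix.transpose_one, Matrix.transpose_mul,
      Matrix.transpose_transpose]
  have hQ1i : Q1 * Q1 = Q1 := by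
    rw [hQ1]
    rw [Matrix.mul_sub, Matrix.sub_mul, Matrix.sub_mul, Matrix.one_mul, Matrix.mul_one,
      Matrix.mul_assoc, ← Matrix.mul_assoc Ulᵀ Ul Ulᵀ, hUl, Matrix.one_mul, Matrix.one_mul]
    abel
  have hQ4t : Q4ᵀ = Q4 := by
    rw [hQ4, Matrix.transpose_sub, Matrix.transpose_one, Matrix.transpose_mul,
      Matrix.transpose_transpose]
  have hQ4i : Q4 * Q4 = Q4 := by
    rw [hQ4]
    rw [Matrix.mul_sub, Matrix.sub_mul, Matrix.sub_mul, Matrix.one_mul, Matrix.mul_one,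
      Matrix.mul_assoc, ← Matrix.mul_assoc Vlᵀ Vl Vlᵀ, hVl, Matrix.one_mul, Matrix.one_mul]
    abel
  -- Xl is killed
  have hXlQ4 : Xl * Q4 = 0 := by
    rw [hXl, hQ4, Matrix.mul_sub, Matrix.mul_one]
    rw [Matrix.mul_assoc (Ul * Cl) Vlᵀ (Vl * Vlᵀ), ← Matrix.mul_assoc Vlᵀ Vl Vlᵀ, hVl,
      Matrix.one_mul]
    abel
  have hQ1Xl : Q1 * Xl = 0 := by
    rw [hXl, hQ1, Matrix.sub_mul, Matrix.one_mul,
      ← Matrix.mul_assoc (Ul * Ulᵀ) (Ul * Cl) Vlᵀ,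
      Matrix.mul_assoc Ul Ulᵀ (Ul * Cl), ← Matrix.mul_assoc Ulᵀ Ul Cl, hUl, Matrix.one_mul]
    exact sub_self _
  have hMQ4 : M * Q4 = T * Q4 := by rw [hM, Matrix.sub_mul, hXlQ4, sub_zero]
  have hQ1M : Q1 * M = Q1 * T := by rw [hM, Matrix.mul_sub, hQ1Xl, sub_zero]
  have e1 : Uᵀ * (M * Q4) = C * (Vᵀ * Q4) := by
    rw [hMQ4, hT, Matrix.mul_assoc (U * C) Vᵀ Q4, ← Matrix.mul_assoc Uᵀ (U * C) (Vᵀ * Q4),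
      ← Matrix.mul_assoc Uᵀ U C, hU, Matrix.one_mul]
  have e2 : C⁻¹ * (Uᵀ * (M * Q4)) = Vᵀ * Q4 := by
    rw [e1, ← Matrix.mul_assoc, hDC, Matrix.one_mul]
  have e3 : Q1 * M * V = Q1 * (U * C) := by
    rw [hQ1M, hT, Matrix.mul_assoc Q1 (U * C * Vᵀ) V, Matrix.mul_assoc (U * C) Vᵀ V, hV,
      Matrix.mul_one]
  have hfact : T - P T = (Q1 * M * V) * (C⁻¹ * (Uᵀ * (M * Q4))) := by
    rw [e2, e3, Matrix.mul_assoc Q1 (U * C) (Vᵀ * Q4), ← Matrix.mul_assoc (U * C) Vᵀ Q4, ← hT]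
    rw [hP, hQ1, hQ4]
    simp only [Matrix.mul_sub, Matrix.sub_mul, Matrix.mul_one, Matrix.one_mul, Matrix.mul_assoc]
    abel
  have hb1 : frobNorm (Q1 * M * V) ≤ frobNorm M := by
    apply frobNorm_le_frobNorm
    calc frobSq (Q1 * M * V) ≤ frobSq (Q1 * M) := frobSq_mul_orth_le _ V hV
      _ ≤ frobSq M := frobSq_proj_mul_le M Q1 hQ1t hQ1i
  have hN : frobNorm (Uᵀ * (M * Q4)) ≤ frobNorm M := by
    apply frobNorm_le_frobNorm
    calc frobSq (Uᵀ * (M * Q4)) ≤ frobSq (M * Q4) := frobSq_orth_mul_le _ U hU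
      _ ≤ frobSq M := frobSq_mul_proj_le M Q4 hQ4t hQ4i
  have hb2 : frobNorm (C⁻¹ * (Uᵀ * (M * Q4))) ≤ frobNorm M / σr := by
    rw [le_div_iff₀ hσpos]
    have h := hσmat (C⁻¹ * (Uᵀ * (M * Q4)))
    rw [← Matrix.mul_assoc C C⁻¹ (Uᵀ * (M * Q4)), hCD, Matrix.one_mul] at h
    calc frobNorm (C⁻¹ * (Uᵀ * (M * Q4))) * σr
        = σr * frobNorm (C⁻¹ * (Uᵀ * (M * Q4))) := mul_comm _ _
      _ ≤ frobNorm (Uᵀ * (M * Q4)) := h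
      _ ≤ frobNorm M := hN
  rw [hfact]
  calc frobNorm ((Q1 * M * V) * (C⁻¹ * (Uᵀ * (M * Q4))))
      ≤ frobNorm (Q1 * M * V) * frobNorm (C⁻¹ * (Uᵀ * (M * Q4))) := frobNorm_mul_le _ _
    _ ≤ frobNorm M * (frobNorm M / σr) :=
        mul_le_mul hb1 hb2 (frobNorm_nonneg _) (frobNorm_nonneg M)
    _ = frobNorm M ^ 2 / σr := by rw [pow_two]; ring
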